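/- Let (K,m) be the infinite complete graph with weights m(i,j) = p_i·p_j, where p_1 ≥ p_2 ≥ p_3 ≥ … > 0 and ∑ p_i = 1. If p_1 ≥ 1/2, then κ(K,m) = 1 − p_1. -/
import Mathlib


open MeasureTheory

/-- A summable weighted graph on a vertex set `V`. -/
structure SummableWeightedGraph (V : Type*) where
  m : V → V → ℝ
  symm : ∀ u v, m u v = m v u
  nonneg : ∀ u v, 0 ≤ m u v
  loopless : ∀ v, m v v = 0
  summable : Summable fun p : V × V => m p.1 p.2
  noIsolated : ∀ v, 0 < ∑' u, m v u

namespace SummableWeightedGraph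

variable {V : Type*} (G : SummableWeightedGraph V)

/-- The weight of a vertex. -/
noncomputable def deg (v : V) : ℝ := ∑' u, G.m v u

/-- The weight of a set of vertices. -/
noncomputable def setWeight (S : Set V) : ℝ := ∑' v : S, G.deg v

/-- The weight of the boundary of a set of vertices. -/
noncomputable def boundaryWeight (S : Set V) : ℝ :=
  ∑' p : ↥S × ↥Sᶜ, G.m p.1 p.2

/-- The Cheeger constant. -/
noncomputable def cheegerConst : ℝ :=
  sInf { r : ℝ | ∃ S : Set V, S.Nonempty ∧ G.setWeight S ≤ G.setWeight Sᶜ ∧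
    r = G.boundaryWeight S / G.setWeight S }

/-- The weighted counting measure on vertices. -/
noncomputable def measure [MeasurableSpace V] : Measure V :=
  Measure.sum fun v => ENNReal.ofReal (G.deg v) • Measure.dirac v

/-- The normalised Laplacian, characterised by its pointwise formula. -/
def IsLaplacian [MeasurableSpace V]
    (L : Lp ℝ 2 G.measure →L[ℝ] Lp ℝ 2 G.measure) : Prop :=
  ∀ f : Lp ℝ 2 G.measure, ∀ᵐ v ∂G.measure,
    L f v = f v - (G.deg v)⁻¹ * ∑' u, G.m v u * f u

end SummableWeightedGraph

namespace SummableWeightedGraph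

variable {V : Type*} (G : SummableWeightedGraph V)

/-- `p_S(v)`, the probability that the random walk moves from `v` into `S` in one step. -/
noncomputable def pProb (S : Set V) (v : V) : ℝ := (∑' u : S, G.m v u) / G.deg v

/-- `κ(A,B)` for a partition `V = A ⊔ B` into nonempty sets. -/
noncomputable def kappaPair (A B : Set V) : ℝ :=
  max (⨆ v : A, G.pProb A v) (⨆ w : B, G.pProb B w)

/-- The invariant `κ(G,m)`. -/
noncomputable def kappa : ℝ :=
  sInf { r : ℝ | ∃ A B : Set V, A.Nonempty ∧ B.Nonempty ∧ Disjoint A B ∧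
    A ∪ B = Set.univ ∧ r = G.kappaPair A B }

end SummableWeightedGraph

open SummableWeightedGraph in
/-- if `p₁ ≥ 1/2` then `κ(K,m) = 1 - p₁` for the infinite complete
graph with weights `m(i,j) = pᵢ·pⱼ`. -/
theorem kappa_complete_graph (p : ℕ → ℝ) (hp : ∀ i, 0 < p i) (hmono : Antitone p)
    (hsum : HasSum p 1) (G : SummableWeightedGraph ℕ)
    (hG : ∀ i j, G.m i j = if i = j then 0 else p i * p j)
    (hhalf : 1 / 2 ≤ p 0) :
    G.kappa = 1 - p 0 := by
  classical
  have hsummable : Summable p := hsum.summable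
  have htsum : ∑' i, p i = 1 := hsum.tsum_eq
  have hpair : ∀ n : ℕ, n ≠ 0 → p 0 + p n ≤ 1 := by
    intro n hn
    have := sum_le_hasSum ({0, n} : Finset ℕ) (fun j _ => (hp j).le) hsum
    rwa [Finset.sum_pair (Ne.symm hn)] at this
  have hplt : ∀ i, p i < 1 := by
    intro i
    rcases eq_or_ne i 0 with rfl | hi
    · have := hpair 1 one_ne_zero; nlinarith [hp 1]
    · have := hpair i hi; nlinarith [hp 0]
  set q := p 0 with hqdef
  have hq1 : q < 1 := hplt 0
  have hq0 : 0 < q := hp 0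
  -- degree formula
  have hite : ∀ v, ∑' u, (if v = u then 0 else p u) = 1 - p v := by
    intro v
    have h1 := Summable.tsum_eq_add_tsum_ite hsummable v
    have h2 : ∑' u, (if v = u then 0 else p u) = ∑' u, (if u = v then 0 else p u) :=
      tsum_congr fun u => by
        rcases eq_or_ne u v with rfl | h
        · rfl
        · simp [h, Ne.symm h]
    rw [htsum] at h1
    rw [h2]; linarith
  have hdeg : ∀ v, G.deg v = p v * (1 - p v) := by
    intro v
    have h1 : ∀ u, G.m v u = p v * (if v = u then 0 else p u) := by
      intro u; rw [hG]; split <;> simp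
    rw [SummableWeightedGraph.deg, tsum_congr h1, tsum_mul_left, hite v]
  -- subtype sums
  have hPS_le : ∀ S : Set ℕ, ∑' u : S, p ↑u ≤ 1 := by
    intro S
    rw [tsum_subtype]
    refine le_trans (Summable.tsum_le_tsum (fun u => ?_) (hsummable.indicator S) hsummable) htsum.le
    exact Set.indicator_le_self' (fun i _ => (hp i).le) u
  have hsubS : ∀ (S : Set ℕ) (v : ℕ), v ∈ S →
      ∑' u : S, G.m v u = p v * ((∑' u : S, p ↑u) - p v) := by
    intro S v hv
    have h1 : ∀ u : S, G.m v ↑u = p v * (if v = ↑u then 0 else p ↑u) := by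
      intro u; rw [hG]; split <;> simp
    rw [tsum_congr h1, tsum_mul_left]
    congr 1
    have hsub : Summable (fun u : S => p ↑u) := hsummable.subtype S
    have h2 := Summable.tsum_eq_add_tsum_ite hsub (⟨v, hv⟩ : S)
    have h3 : ∑' u : S, (if v = ↑u then 0 else p ↑u)
        = ∑' u : S, (if u = (⟨v, hv⟩ : S) then 0 else p ↑u) :=
      tsum_congr fun u => by
        rcases eq_or_ne (u : ℕ) v with h | h
        · simp [h, Subtype.ext_iff]
        · simp [h, Ne.symm h, Subtype.ext_iff]
    rw [h3]; simp only at h2; linarith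
  have hpProbS : ∀ (S : Set ℕ) (v : ℕ), v ∈ S →
      G.pProb S v = ((∑' u : S, p ↑u) - p v) / (1 - p v) := by
    intro S v hv
    rw [SummableWeightedGraph.pProb, hsubS S v hv, hdeg, mul_div_mul_left _ _ (hp v).ne']
  have hbdd : ∀ S : Set ℕ, BddAbove (Set.range fun v : S => G.pProb S ↑v) := by
    intro S
    refine ⟨1, ?_⟩
    rintro x ⟨v, rfl⟩
    show G.pProb S ↑v ≤ 1
    rw [hpProbS S (v : ℕ) v.2]
    have h1 : ∑' u : S, p ↑u ≤ 1 := hPS_le S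
    have h2 := hplt (v : ℕ)
    rw [div_le_one (by linarith)]
    linarith
  -- the complement sum
  have hPB : ∑' u : ({0}ᶜ : Set ℕ), p ↑u = 1 - q := by
    rw [tsum_subtype]
    have h1 := Summable.tsum_eq_add_tsum_ite hsummable 0
    rw [htsum] at h1
    have h2 : ∑' x, ({0}ᶜ : Set ℕ).indicator p x = ∑' x, (if x = 0 then 0 else p x) :=
      tsum_congr fun x => by
        rcases eq_or_ne x 0 with rfl | h
        · simp [Set.indicator]
        · simp [Set.indicator, h]
    rw [h2]; linarith
  haveI : Nonempty ({0}ᶜ : Set ℕ) := ⟨⟨1, by simp⟩⟩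
  -- the supremum over the complement of {0}
  have hsupB : (⨆ w : ({0}ᶜ : Set ℕ), G.pProb {0}ᶜ ↑w) = 1 - q := by
    have hval : ∀ w : ({0}ᶜ : Set ℕ), G.pProb {0}ᶜ ↑w = (1 - q - p ↑w) / (1 - p ↑w) := by
      intro w; rw [hpProbS _ _ w.2, hPB]
    apply le_antisymm
    · apply ciSup_le
      intro w
      rw [hval w]
      have h1 := hplt (w : ℕ)
      have h2 := hp (w : ℕ)
      rw [div_le_iff₀ (by linarith)]
      nlinarith
    · apply le_of_forall_lt
      intro c hc
      have htend : ∀ᶠ n in Filter.atTop, p n < (1 - q - c) / 2 :=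
        (hsummable.tendsto_atTop_zero).eventually_lt_const (by linarith)
      obtain ⟨n, hn1, hn2⟩ := (htend.and (Filter.eventually_ge_atTop 1)).exists
      have hn0 : n ≠ 0 := by omega
      have hw : n ∈ ({0}ᶜ : Set ℕ) := by simpa using hn0
      refine lt_of_lt_of_le ?_ (le_ciSup (hbdd _) (⟨n, hw⟩ : ({0}ᶜ : Set ℕ)))
      rw [hval]
      have hpn : p 0 + p n ≤ 1 := hpair n hn0
      have h2 := hp n
      rw [lt_div_iff₀ (by linarith [hplt n])]
      nlinarith
  -- sup over {0} is zero
  haveI : Nonempty ({0} : Set ℕ) := ⟨⟨0, rfl⟩⟩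
  have hsupA : (⨆ v : ({0} : Set ℕ), G.pProb {0} ↑v) = 0 := by
    have h1 : ∀ v : ({0} : Set ℕ), G.pProb {0} ↑v = 0 := by
      intro v
      have hv0 : (v : ℕ) = 0 := v.2
      rw [hv0, SummableWeightedGraph.pProb, tsum_singleton 0 (G.m 0), G.loopless, zero_div]
    calc (⨆ v : ({0} : Set ℕ), G.pProb {0} ↑v) = ⨆ _ : ({0} : Set ℕ), (0 : ℝ) :=
          iSup_congr h1
      _ = 0 := ciSup_const
  -- key lower bound
  have hkey : ∀ A B : Set ℕ, A.Nonempty → B.Nonempty → Disjoint A B → A ∪ B = Set.univ →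
      0 ∈ A → 1 - q ≤ G.kappaPair A B := by
    intro A B hA hB hdisj hunion h0A
    by_cases hex : ∃ v ∈ A, v ≠ 0
    · obtain ⟨v, hvA, hv0⟩ := hex
      have hsumA : p 0 + p v ≤ ∑' u : A, p ↑u := by
        rw [tsum_subtype]
        calc p 0 + p v = ∑ j ∈ ({0, v} : Finset ℕ), A.indicator p j := by
              rw [Finset.sum_pair (Ne.symm hv0)]
              rw [Set.indicator_of_mem h0A, Set.indicator_of_mem hvA]
          _ ≤ ∑' j, A.indicator p j :=
              Summable.sum_le_tsum _ (fun i _ => Set.indicator_nonneg (fun i _ => (hp i).le) i)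
                (hsummable.indicator A)
      have hPA_le : ∑' u : A, p ↑u ≤ 1 := hPS_le A
      have hval : 1 - q ≤ G.pProb A v := by
        rw [hpProbS A v hvA]
        have h1 := hplt v
        have h2 := hp v
        rw [le_div_iff₀ (by linarith)]
        nlinarith
      exact le_trans (le_trans hval (le_ciSup (hbdd A) ⟨v, hvA⟩)) (le_max_left _ _)
    · push_neg at hex
      have hA0 : A = {0} := Set.eq_singleton_iff_unique_mem.2 ⟨h0A, fun x hx => hex x hx⟩
      have hB0 : B = {0}ᶜ := by
        ext x
        simp only [Set.mem_compl_iff, Set.mem_singleton_iff]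
        constructor
        · intro hxB hx0
          subst hx0
          exact (Set.disjoint_left.1 hdisj h0A) hxB
        · intro hx0
          have hx : x ∈ A ∪ B := hunion ▸ Set.mem_univ x
          rcases hx with h | h
          · exact absurd (hex x h) hx0
          · exact h
      rw [hA0, hB0, SummableWeightedGraph.kappaPair, hsupB]
      exact le_max_right _ _
  -- conclude
  rw [SummableWeightedGraph.kappa]
  refine IsLeast.csInf_eq ⟨⟨{0}, {0}ᶜ, ⟨0, rfl⟩, ⟨1, by simp⟩, disjoint_compl_right, by simp, ?_⟩, ?_⟩
  · rw [SummableWeightedGraph.kappaPair, hsupA, hsupB, max_eq_right (by linarith)]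
  · rintro r ⟨A, B, hA, hB, hdisj, hunion, rfl⟩
    have h0 : (0 : ℕ) ∈ A ∪ B := hunion ▸ Set.mem_univ 0
    rcases h0 with h | h
    · exact hkey A B hA hB hdisj hunion h
    · have := hkey B A hB hA hdisj.symm (by rw [Set.union_comm]; exact hunion) h
      rwa [SummableWeightedGraph.kappaPair, max_comm, ← SummableWeightedGraph.kappaPair] at this
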